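/- Let A be a truncated discrete valuation ring, i.e., A = R/I for a discrete valuation ring R and a proper nonzero ideal I. Then every finitely generated A-module (indeed every A-module) is a direct sum of cyclic A-modules, each of the form A/(t^j) where t is a uniformizing parameter. -/

import Mathlib

open DirectSum

universe u

-- sum-index direct sum decomposition
noncomputable def directSumSumLEquiv (S : Type*) [Ring S] {ι₁ ι₂ : Type*}
    (β : ι₁ ⊕ ι₂ → Type*) [∀ x, AddCommGroup (β x)] [∀ x, Module S (β x)] :
    ((⨁ i, β (.inl i)) × (⨁ i, β (.inr i))) ≃ₗ[S] ⨁ x, β x := by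
  classical
  refine LinearEquiv.ofLinear
    (LinearMap.coprod (DirectSum.toModule S _ _ fun i => DirectSum.lof S _ β (.inl i))
      (DirectSum.toModule S _ _ fun i => DirectSum.lof S _ β (.inr i)))
    (DirectSum.toModule S _ _ (fun x => Sum.rec
      (fun i => (LinearMap.inl S _ _).comp (DirectSum.lof S ι₁ (fun i => β (.inl i)) i))
      (fun i => (LinearMap.inr S _ _).comp (DirectSum.lof S ι₂ (fun i => β (.inr i)) i)) x))
    ?_ ?_
  · apply DirectSum.linearMap_ext
    intro x
    cases x with
    | inl i => ext v : 1; simp [DirectSum.toModule_lof]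
    | inr i => ext v : 1; simp [DirectSum.toModule_lof]
  · rw [LinearMap.comp_coprod, ← LinearMap.coprod_inl_inr (M := ⨁ i, β (.inl i))]
    congr 1 <;> apply DirectSum.linearMap_ext <;> intro i <;> ext v : 1 <;>
      simp [DirectSum.toModule_lof]

noncomputable def quotPowEquiv {R : Type u} [CommRing R] (I : Ideal R) (s : R)
    (hle : I ≤ Ideal.span {s}) :
    (R ⧸ Ideal.span {s}) ≃ₗ[R] ((R ⧸ I) ⧸ Ideal.span {Ideal.Quotient.mk I s}) := by
  have hmap : (Ideal.span {s}).map (Ideal.Quotient.mkₐ R I)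
      = Ideal.span {Ideal.Quotient.mk I s} := by
    rw [Ideal.map_span, Set.image_singleton]
    simp [Ideal.Quotient.mkₐ_eq_mk]
  exact ((DoubleQuot.quotQuotEquivQuotOfLEₐ R hle).symm.trans
    (Ideal.quotientEquivAlgOfEq R hmap)).toLinearEquiv


section
variable {R : Type u} [CommRing R] [IsDomain R] [IsDiscreteValuationRing R]


lemma key_div {t : R} (ht : Irreducible t) {m j : ℕ} (hj : j ≤ m) {a : R}
    (h : t ^ (m - j) * a ∈ Ideal.span {t ^ m}) : a ∈ Ideal.span {t ^ j} := by
  rw [Ideal.mem_span_singleton] at h ⊢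
  obtain ⟨c, hc⟩ := h
  refine ⟨c, ?_⟩
  have ht0 : t ^ (m - j) ≠ 0 := pow_ne_zero _ ht.ne_zero
  apply mul_left_cancel₀ ht0
  rw [hc]
  have : t ^ m = t ^ (m - j) * t ^ j := by rw [← pow_add]; congr 1; omega
  rw [this, mul_assoc]

lemma ideal_classify {t : R} (ht : Irreducible t) (n : ℕ)
    (J : Ideal (R ⧸ Ideal.span {t ^ n})) :
    ∃ j ≤ n, J = Ideal.span {Ideal.Quotient.mk (Ideal.span {t ^ n}) (t ^ j)} := by
  have hcom : Ideal.span {t ^ n} ≤ J.comap (Ideal.Quotient.mk (Ideal.span {t ^ n})) := by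
    intro x hx
    simp [Ideal.mem_comap, Ideal.Quotient.eq_zero_iff_mem.mpr hx]
  have hne : J.comap (Ideal.Quotient.mk (Ideal.span {t ^ n})) ≠ ⊥ := by
    intro hbot
    have : (t ^ n : R) ∈ (⊥ : Ideal R) := hbot ▸ hcom (Ideal.subset_span rfl)
    exact pow_ne_zero n ht.ne_zero (by simpa using this)
  obtain ⟨j, hj⟩ := IsDiscreteValuationRing.ideal_eq_span_pow_irreducible hne ht
  have hjn : j ≤ n := by
    have : (t ^ n : R) ∈ Ideal.span {t ^ j} := hj ▸ hcom (Ideal.subset_span rfl)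
    rw [Ideal.mem_span_singleton] at this
    exact (pow_dvd_pow_iff ht.ne_zero ht.not_isUnit).mp this
  refine ⟨j, hjn, ?_⟩
  have hmc := Ideal.map_comap_of_surjective _ Ideal.Quotient.mk_surjective J
  rw [← hmc, hj, Ideal.map_span, Set.image_singleton]

/-- divisibility in the truncated ring -/
lemma trunc_div {t : R} (ht : Irreducible t) {n j : ℕ} (hj : j ≤ n)
    {α : R ⧸ Ideal.span {t ^ n}}
    (h : Ideal.Quotient.mk (Ideal.span {t ^ n}) (t ^ (n - j)) * α = 0) :
    ∃ β, α = Ideal.Quotient.mk (Ideal.span {t ^ n}) (t ^ j) * β := by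
  obtain ⟨a, rfl⟩ := Ideal.Quotient.mk_surjective α
  rw [← map_mul, Ideal.Quotient.eq_zero_iff_mem] at h
  obtain ⟨c, hc⟩ := Ideal.mem_span_singleton.mp (key_div ht hj h)
  exact ⟨Ideal.Quotient.mk _ c, by rw [← map_mul, ← hc]⟩

set_option maxHeartbeats 1000000 in
lemma baer_finsupp (t : R) (ht : Irreducible t) (n : ℕ) (σ : Type*) :
    Module.Baer (R ⧸ Ideal.span {t ^ n})
      (σ →₀ (R ⧸ Ideal.span {t ^ n})) := by
  classical
  intro J f
  obtain ⟨j, hjn, rfl⟩ := ideal_classify ht n J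
  have hgmem : Ideal.Quotient.mk (Ideal.span {t ^ n}) (t ^ j) ∈
      Ideal.span {Ideal.Quotient.mk (Ideal.span {t ^ n}) (t ^ j)} := Ideal.subset_span rfl
  obtain ⟨a, ha⟩ : ∃ a, a = f ⟨_, hgmem⟩ := ⟨_, rfl⟩
  have hta : Ideal.Quotient.mk (Ideal.span {t ^ n}) (t ^ (n - j)) • a = 0 := by
    rw [ha, ← map_smul]
    have h0 : (Ideal.Quotient.mk (Ideal.span {t ^ n}) (t ^ (n - j)) •
        (⟨_, hgmem⟩ : Ideal.span {Ideal.Quotient.mk (Ideal.span {t ^ n}) (t ^ j)})) = 0 := by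
      apply Subtype.ext
      show Ideal.Quotient.mk (Ideal.span {t ^ n}) (t ^ (n - j)) *
        Ideal.Quotient.mk (Ideal.span {t ^ n}) (t ^ j) = 0
      rw [← map_mul, ← pow_add, Ideal.Quotient.eq_zero_iff_mem]
      apply Ideal.subset_span
      congr
      omega
    rw [h0, map_zero]
  -- componentwise divisibility
  have hdiv : ∀ x : σ, ∃ β, a x = Ideal.Quotient.mk (Ideal.span {t ^ n}) (t ^ j) * β := by
    intro x
    apply trunc_div ht hjn
    have := DFunLike.congr_fun hta x
    simpa using this
  choose β hβ using hdiv
  obtain ⟨b, hb⟩ : ∃ b : σ →₀ (R ⧸ Ideal.span {t ^ n}), b = Finsupp.onFinset a.support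
      (fun x => if a x = 0 then 0 else β x)
      (by intro x hx; by_contra hmem; simp [Finsupp.notMem_support_iff.mp hmem] at hx) :=
    ⟨_, rfl⟩
  have hgb : Ideal.Quotient.mk (Ideal.span {t ^ n}) (t ^ j) • b = a := by
    ext x
    rw [Finsupp.smul_apply, smul_eq_mul]
    by_cases h0 : a x = 0
    · simp [hb, Finsupp.onFinset_apply, h0]
    · simp only [hb, Finsupp.onFinset_apply, h0, if_false]
      exact (hβ x).symm
  refine ⟨LinearMap.toSpanSingleton _ _ b, ?_⟩
  intro x hx
  obtain ⟨c, hc⟩ := Ideal.mem_span_singleton'.mp hx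
  have hxc : (⟨x, hx⟩ : Ideal.span {Ideal.Quotient.mk (Ideal.span {t ^ n}) (t ^ j)}) =
      c • ⟨_, hgmem⟩ := by
    apply Subtype.ext
    exact hc.symm
  rw [hxc, map_smul, ← ha, LinearMap.toSpanSingleton_apply, ← hc, mul_smul, hgb]

set_option maxHeartbeats 2000000 in
theorem mainR {t : R} (ht : Irreducible t) :
    ∀ (m : ℕ) (M : Type u) [AddCommGroup M] [Module R M], (∀ x : M, t ^ m • x = 0) →
    ∃ (ι : Type u) (j : ι → ℕ), (∀ i, j i ≤ m) ∧
      Nonempty (M ≃ₗ[R] ⨁ i : ι, R ⧸ Ideal.span {t ^ j i}) := by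
  intro m
  induction m with
  | zero =>
    intro M _ _ htor
    have hzero : ∀ x : M, x = 0 := fun x => by simpa using htor x
    refine ⟨PEmpty, fun _ => 0, fun i => le_rfl, ⟨?_⟩⟩
    exact { toFun := fun _ => 0, invFun := fun _ => 0,
            map_add' := by simp, map_smul' := by simp,
            left_inv := fun x => (hzero x).symm,
            right_inv := fun y => by
              apply DFinsupp.ext; intro i; exact i.elim }
  | succ m IH =>
    intro M _ _ htor
    classical
    have htorset : Module.IsTorsionBySet R M (Ideal.span {t ^ (m+1)} : Ideal R) := by
      intro x a
      obtain ⟨c, hc⟩ := Ideal.mem_span_singleton.mp a.2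
      rw [hc, mul_comm, mul_smul, htor, smul_zero]
    letI : Module (R ⧸ Ideal.span {t ^ (m+1)}) M := htorset.module
    haveI : IsScalarTower R (R ⧸ Ideal.span {t ^ (m+1)}) M :=
      Module.IsTorsionBySet.isScalarTower htorset
    obtain ⟨s₀, hs₀⟩ := zorn_subset
      {s : Set M | (∀ x ∈ s, ¬ t ^ m • x = 0) ∧
        LinearIndependent (R ⧸ Ideal.span {t ^ (m+1)}) (fun x => x : s → M)} (by
      intro c hcsub hchain
      rcases Set.eq_empty_or_nonempty c with rfl | hcne
      · exact ⟨∅, ⟨by simp, linearIndependent_empty _ _⟩, by simp⟩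
      · refine ⟨⋃₀ c, ⟨?_, ?_⟩, fun s hs => Set.subset_sUnion_of_mem hs⟩
        · rintro x ⟨s, hs, hxs⟩
          exact (hcsub hs).1 x hxs
        · exact linearIndepOn_sUnion_of_directed (v := (id : M → M)) hchain.directedOn
            (fun a ha => (hcsub ha).2))
    have hs₀mem := hs₀.prop
    -- the free part
    set F := Submodule.span (R ⧸ Ideal.span {t ^ (m+1)})
      (Set.range (fun x => x : s₀ → M)) with hF
    let E := hs₀mem.2.linearCombinationEquiv
    haveI : Module.Injective (R ⧸ Ideal.span {t ^ (m+1)})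
        (↥s₀ →₀ (R ⧸ Ideal.span {t ^ (m+1)})) :=
      (baer_finsupp t ht (m+1) ↥s₀).injective
    obtain ⟨h, hh⟩ := Module.Injective.out
      (Submodule.subtype F) (Submodule.injective_subtype F) E.symm.toLinearMap
    let r : M →ₗ[R ⧸ Ideal.span {t ^ (m+1)}] F := E.toLinearMap.comp h
    have hproj : ∀ x : F, r ↑x = x := by
      intro x
      show E (h ((Submodule.subtype F) x)) = x
      rw [hh x]
      simp
    have hcompl := LinearMap.isCompl_of_proj hproj
    have hFN : ∀ z : M, z ∈ F → z ∈ LinearMap.ker r → z = 0 := by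
      intro z h1 h2
      rw [LinearMap.mem_ker] at h2
      have h3 := hproj ⟨z, h1⟩
      have h4 : (⟨z, h1⟩ : F) = 0 := by rw [← h3]; exact h2
      exact congrArg Subtype.val h4
    -- elements of the kernel are annihilated by t ^ m
    have hN : ∀ y ∈ LinearMap.ker r, t ^ m • y = 0 := by
      intro y hy
      by_contra hyne
      have hc0 : ∀ cA : (R ⧸ Ideal.span {t ^ (m+1)}), cA • y = 0 → cA = 0 := by
        intro cA hcay
        by_contra hcne
        obtain ⟨c', rfl⟩ := Ideal.Quotient.mk_surjective cA
        have hc'ne : c' ≠ 0 := by rintro rfl; simp at hcne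
        have hc'nmem : c' ∉ Ideal.span {t ^ (m+1)} := fun hmem =>
          hcne (Ideal.Quotient.eq_zero_iff_mem.mpr hmem)
        obtain ⟨k, u, hcu⟩ := IsDiscreteValuationRing.eq_unit_mul_pow_irreducible hc'ne ht
        have hk : k ≤ m := by
          by_contra hk
          push_neg at hk
          refine hc'nmem (Ideal.mem_span_singleton.mpr ⟨(u : R) * t ^ (k - (m+1)), ?_⟩)
          rw [hcu]
          have hpow : t ^ k = t ^ (m+1) * t ^ (k - (m+1)) := by
            rw [← pow_add]; congr 1; omega
          rw [hpow]; ring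
        have h1 : c' • y = 0 := by
          rw [← algebraMap_smul (R ⧸ Ideal.span {t ^ (m+1)}) c' y,
            Ideal.Quotient.algebraMap_eq]
          exact hcay
        have h2 : (u : R) • (t ^ k • y) = 0 := by rw [← mul_smul, ← hcu]; exact h1
        have h3 : t ^ k • y = 0 := by
          have h4 := congrArg (fun z => ((u⁻¹ : Rˣ) : R) • z) h2
          simpa [← mul_smul] using h4
        apply hyne
        have h5 : t ^ m • y = t ^ (m - k) • (t ^ k • y) := by
          rw [← mul_smul, ← pow_add]; congr 2; omega
        rw [h5, h3, smul_zero]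
      have hins : (insert y s₀) ∈
          {s : Set M | (∀ x ∈ s, ¬ t ^ m • x = 0) ∧
            LinearIndependent (R ⧸ Ideal.span {t ^ (m+1)}) (fun x => x : s → M)} := by
        constructor
        · rintro x (rfl | hx)
          · exact hyne
          · exact hs₀mem.1 x hx
        · refine (linearIndepOn_iff (v := (id : M → M))).mpr ?_
          intro l hl hlt
          have hdec := Finsupp.single_add_erase y l
          have hsuppset : ∀ x ∈ (Finsupp.erase y l).support, x ∈ s₀ := by
            intro x hx
            rw [Finsupp.support_erase] at hx
            have hx1 := Finset.mem_erase.mp hx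
            have hx2 := (Finsupp.mem_supported _ l).mp hl (Finset.mem_coe.mpr hx1.2)
            rcases hx2 with rfl | hxs
            · exact absurd rfl hx1.1
            · exact hxs
          have hsupp' : l.erase y ∈ Finsupp.supported (R ⧸ Ideal.span {t ^ (m+1)})
              (R ⧸ Ideal.span {t ^ (m+1)}) s₀ := by
            rw [Finsupp.mem_supported]
            intro x hx
            exact hsuppset x (Finset.mem_coe.mp hx)
          have hsplit : l y • y +
              Finsupp.linearCombination _ id (l.erase y) = 0 := by
            have h6 := congrArg (Finsupp.linearCombination
              (R ⧸ Ideal.span {t ^ (m+1)}) (id : M → M)) hdec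
            rw [map_add, Finsupp.linearCombination_single] at h6
            simp only [id_eq] at h6
            rw [h6]
            exact hlt
          have hTF : Finsupp.linearCombination _ id (l.erase y) ∈ F := by
            rw [Finsupp.linearCombination_apply, Finsupp.sum]
            apply Submodule.sum_mem
            intro x hx
            apply Submodule.smul_mem
            exact Submodule.subset_span ⟨⟨x, hsuppset x hx⟩, rfl⟩
          have hcy : l y • y = 0 := by
            refine hFN _ ?_ (Submodule.smul_mem _ _ hy)
            have h7 : l y • y = - Finsupp.linearCombination _ id (l.erase y) :=
              eq_neg_of_add_eq_zero_left hsplit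
            rw [h7]
            exact Submodule.neg_mem _ hTF
          have hcz : l y = 0 := hc0 (l y) hcy
          have hT0 : Finsupp.linearCombination _ id (l.erase y) = 0 := by
            rwa [hcy, zero_add] at hsplit
          have hl'0 : l.erase y = 0 :=
            ((linearIndepOn_iff (v := (id : M → M))).mp hs₀mem.2) _ hsupp' hT0
          rw [← hdec, hcz, Finsupp.single_zero, hl'0, add_zero]
      have hsub : insert y s₀ ⊆ s₀ := hs₀.2 hins (Set.subset_insert y s₀)
      have hymem : y ∈ s₀ := hsub (Set.mem_insert y s₀)
      have hyF : y ∈ F := Submodule.subset_span ⟨⟨y, hymem⟩, rfl⟩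
      exact hyne (by rw [hFN y hyF hy, smul_zero])
    -- apply induction hypothesis to the kernel
    have htorN : ∀ x : ↥(LinearMap.ker r), t ^ m • x = 0 := by
      intro x
      apply Subtype.ext
      show t ^ m • (x : M) = (0 : M)
      exact hN x x.2
    obtain ⟨ι', j', hj', ⟨ψ⟩⟩ := IH ↥(LinearMap.ker r) htorN
    -- assemble
    let eqFN := Submodule.prodEquivOfIsCompl F (LinearMap.ker r) hcompl
    let φ₁ := E.symm.restrictScalars R
    let φ₂ := finsuppLEquivDirectSum R (R ⧸ Ideal.span {t ^ (m+1)}) ↥s₀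
    refine ⟨↥s₀ ⊕ ι', Sum.elim (fun _ => m+1) j', ?_, ⟨?_⟩⟩
    · rintro (i | i)
      · exact le_rfl
      · exact (hj' i).trans (Nat.le_succ m)
    · exact (eqFN.restrictScalars R).symm.trans
        (((φ₁.trans φ₂).prodCongr ψ).trans (directSumSumLEquiv R
          (fun x => R ⧸ Ideal.span {t ^ (Sum.elim (fun _ : ↥s₀ => m+1) j' x)})))
end

/-- Let `A = R/I` be a truncated discrete valuation ring (`R` a DVR, `I` a proper
nonzero ideal).  Then every `A`-module is a direct sum of cyclic `A`-modules of the
form `A/(t^j)`, where `t` is a uniformizing parameter. -/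
theorem stmt15 {R : Type u} [CommRing R] [IsDomain R] [IsDiscreteValuationRing R]
    (I : Ideal R) (hI0 : I ≠ ⊥) (hI1 : I ≠ ⊤) (t : R) (ht : Irreducible t)
    (M : Type u) [AddCommGroup M] [Module (R ⧸ I) M] :
    ∃ (ι : Type u) (j : ι → ℕ),
      Nonempty (M ≃ₗ[R ⧸ I]
        ⨁ i : ι, (R ⧸ I) ⧸ Ideal.span {Ideal.Quotient.mk I t ^ j i}) := by
  obtain ⟨n, rfl⟩ := IsDiscreteValuationRing.ideal_eq_span_pow_irreducible hI0 ht
  letI : Module R M := Module.compHom M (Ideal.Quotient.mk (Ideal.span {t ^ n}))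
  haveI : IsScalarTower R (R ⧸ Ideal.span {t ^ n}) M := ⟨fun r b x => by
    show (r • b) • x = (Ideal.Quotient.mk (Ideal.span {t ^ n}) r) • (b • x)
    rw [Algebra.smul_def, Ideal.Quotient.algebraMap_eq, mul_smul]⟩
  have htor : ∀ x : M, t ^ n • x = 0 := by
    intro x
    show (Ideal.Quotient.mk (Ideal.span {t ^ n}) (t ^ n)) • x = 0
    have h0 : Ideal.Quotient.mk (Ideal.span {t ^ n}) (t ^ n) = 0 :=
      Ideal.Quotient.eq_zero_iff_mem.mpr (Ideal.subset_span rfl)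
    rw [h0, zero_smul]
  obtain ⟨ι, j, hj, ⟨Θ⟩⟩ := mainR ht n M htor
  refine ⟨ι, j, ⟨?_⟩⟩
  have q : ∀ i : ι, (R ⧸ Ideal.span {t ^ j i}) ≃ₗ[R]
      ((R ⧸ Ideal.span {t ^ n}) ⧸
        Ideal.span {Ideal.Quotient.mk (Ideal.span {t ^ n}) t ^ j i}) := by
    intro i
    rw [← map_pow]
    exact quotPowEquiv _ _ (Ideal.span_singleton_le_span_singleton.mpr
      (pow_dvd_pow t (hj i)))
  have Θ₂ := Θ.trans (DFinsupp.mapRange.linearEquiv q)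
  exact Θ₂.extendScalarsOfSurjective
    (by rw [Ideal.Quotient.algebraMap_eq]; exact Ideal.Quotient.mk_surjective)
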